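/- Let E be a finite-dimensional real normed vector space, let J : E → (E →L[ℝ] E) be a C¹ map such that J(p) ∘ J(p) = −id for every p ∈ E, and let X, Y : E → E be C¹ vector fields. For a vector field Z define the covariant derivative (∇_Z J)(W)(p) := (fderiv ℝ J p (Z p)) (W p) for a vector field W, define (J·Z)(p) := J(p)(Z(p)), write dJ(X,Y)(p) := (∇_X J)(Y)(p) − (∇_Y J)(X)(p), and let [·,·] denote the Lie bracket of vector fields, [X,Y](p) = fderiv ℝ Y p (X p) − fderiv ℝ X p (Y p). Then for every p ∈ E: dJ(X,Y)(p) − dJ(J·X, J·Y)(p) = [J·X, Y](p) + [X, J·Y](p) + J(p)([J·X, J·Y](p)) − J(p)([X,Y](p)). -/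

import Mathlib

open scoped Topology

variable {E : Type*} [NormedAddCommGroup E] [NormedSpace ℝ E]

/-- The action of a pointwise endomorphism field `J` on a vector field `Z`:
`(J·Z)(p) = J(p)(Z(p))`. -/
def jApply (J : E → (E →L[ℝ] E)) (Z : E → E) : E → E :=
  fun p => J p (Z p)

/-- The Lie bracket of vector fields on a vector space:
`[X,Y](p) = DY(p)(X(p)) − DX(p)(Y(p))`. -/
noncomputable def lieBkt (X Y : E → E) : E → E :=
  fun p => fderiv ℝ Y p (X p) - fderiv ℝ X p (Y p)

/-- Flat-space instance of `dJ(X,Y) − dJ(JX,JY) = N(J)(X,Y)`: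
for a `C¹` almost complex structure `J` on a finite-dimensional real vector
space (`J(p)² = −id`) and `C¹` vector fields `X, Y`, the difference
`dJ(X,Y)(p) − dJ(J·X, J·Y)(p)`, where `dJ(X,Y)(p) = (∇_X J)(Y)(p) − (∇_Y J)(X)(p)`
and `(∇_Z J)(W)(p) = (DJ(p)(Z(p)))(W(p))`, equals the Nijenhuis tensor
`[J·X, Y](p) + [X, J·Y](p) + J(p)([J·X, J·Y](p)) − J(p)([X,Y](p))`. -/
theorem dJ_sub_dJ_eq_nijenhuis [FiniteDimensional ℝ E]
    (J : E → (E →L[ℝ] E)) (hJ : ContDiff ℝ 1 J)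
    (hJ2 : ∀ p, (J p).comp (J p) = -ContinuousLinearMap.id ℝ E)
    (X Y : E → E) (hX : ContDiff ℝ 1 X) (hY : ContDiff ℝ 1 Y) (p : E) :
    ((fderiv ℝ J p (X p)) (Y p) - (fderiv ℝ J p (Y p)) (X p)) -
        ((fderiv ℝ J p (jApply J X p)) (jApply J Y p) -
          (fderiv ℝ J p (jApply J Y p)) (jApply J X p)) =
      lieBkt (jApply J X) Y p + lieBkt X (jApply J Y) p +
        J p (lieBkt (jApply J X) (jApply J Y) p) - J p (lieBkt X Y p) := by
  have hJd : DifferentiableAt ℝ J p := (hJ.differentiable one_ne_zero) p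
  have hXd : DifferentiableAt ℝ X p := (hX.differentiable one_ne_zero) p
  have hYd : DifferentiableAt ℝ Y p := (hY.differentiable one_ne_zero) p
  have key : ∀ v w : E, fderiv ℝ J p v (J p w) = - J p (fderiv ℝ J p v w) := by
    intro v w
    have hu : DifferentiableAt ℝ (fun q => J q w) p :=
      hJd.clm_apply (differentiableAt_const w)
    have h1 : (fun q => J q (J q w)) = fun _ => -w := by
      funext q
      simpa using DFunLike.congr_fun (hJ2 q) w
    have h4 : fderiv ℝ (fun q => J q w) p = (fderiv ℝ J p).flip w := by
      rw [fderiv_clm_apply hJd (differentiableAt_const w)]; simp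
    have h3 := fderiv_clm_apply hJd hu
    rw [show fderiv ℝ (fun q => J q (J q w)) p = 0 by rw [h1]; simp, h4] at h3
    have := DFunLike.congr_fun h3.symm v
    simp at this
    rw [add_comm] at this
    exact eq_neg_of_add_eq_zero_left this
  have hJJ : ∀ w : E, J p (J p w) = -w := by
    intro w; simpa using DFunLike.congr_fun (hJ2 p) w
  have hDJ : ∀ Z : E → E, DifferentiableAt ℝ Z p →
      fderiv ℝ (jApply J Z) p =
        (J p).comp (fderiv ℝ Z p) + (fderiv ℝ J p).flip (Z p) := by
    intro Z hZ
    exact fderiv_clm_apply hJd hZ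
  simp only [lieBkt, jApply, hDJ X hXd, hDJ Y hYd]
  simp only [ContinuousLinearMap.add_apply, ContinuousLinearMap.coe_comp',
    Function.comp_apply, ContinuousLinearMap.flip_apply, map_sub, map_add,
    key, hJJ]
  abel
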